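/- Let H ∈ (1/2, 3/4), let Σ > 0 and let σ : [0,1] → ℝ be measurable with 0 ≤ σ(t) ≤ Σ. Let (G_t)_{t∈[0,1]} be a centered Gaussian process on a probability space (Ω, F, P) with covariance E[G_s G_t] = H(2H−1) ∫_0^s ∫_0^t σ(u) σ(v) |u − v|^{2H−2} du dv. For N ≥ 1 and 0 ≤ k ≤ N−1 set η_k = G_{(k+1)/N} − G_{k/N} and δ_k = E[G_{(k+1)/N}²] − E[G_{k/N}²]. Then the random variable G_N = N^{2H−1/2} Σ_{k=0}^{N−1} η_k δ_k converges to 0 in L²(P) as N → ∞, i.e. E[G_N²] → 0. -/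

import Mathlib

open MeasureTheory ProbabilityTheory Filter Topology NNReal
open Real Set intervalIntegral


lemma aux_meas_abs_rpow (r : ℝ) : Measurable (fun v : ℝ => |v| ^ r) := by measurability

lemma aux_ii_abs_rpow {r : ℝ} (hr : -1 < r) (a b : ℝ) :
    IntervalIntegrable (fun v => |v| ^ r) volume a b := by
  have h : ∀ c : ℝ, 0 ≤ c → IntervalIntegrable (fun v => |v| ^ r) volume 0 c := by
    intro c hc
    refine (intervalIntegrable_rpow' hr (a := 0) (b := c)).mono_fun'
      (aux_meas_abs_rpow r).aestronglyMeasurable ?_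
    filter_upwards [ae_restrict_mem measurableSet_uIoc] with x hx
    rw [uIoc_of_le hc] at hx
    rw [Real.norm_eq_abs, abs_of_nonneg (rpow_nonneg (abs_nonneg x) r), abs_of_pos hx.1]
  have h' : ∀ c : ℝ, IntervalIntegrable (fun v => |v| ^ r) volume 0 c := by
    intro c
    rcases le_total 0 c with hc | hc
    · exact h c hc
    · have := (h (-c) (by linarith)).comp_sub_left 0
      simp only [zero_sub, abs_neg, sub_zero, sub_neg_eq_add, zero_add, neg_neg] at this
      exact this
  exact (h' a).symm.trans (h' b)

lemma aux_ii_abs_sub_rpow {r : ℝ} (hr : -1 < r) (u a b : ℝ) :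
    IntervalIntegrable (fun v => |u - v| ^ r) volume a b := by
  have := (aux_ii_abs_rpow hr (u - a) (u - b)).comp_sub_left u
  simpa using this

lemma aux_integral_abs_sub_rpow_le {r : ℝ} (hr : -1 < r) {u a b : ℝ}
    (hu : u ∈ Icc (0:ℝ) 1) (ha : 0 ≤ a) (hab : a ≤ b) (hb : b ≤ 1) :
    ∫ v in a..b, |u - v| ^ r ≤ 2 / (r + 1) := by
  have hr1 : (0:ℝ) < r + 1 := by linarith
  have h01 : ∫ v in (0:ℝ)..1, |u - v| ^ r ≤ 2 / (r + 1) := by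
    rw [← integral_add_adjacent_intervals (aux_ii_abs_sub_rpow hr u 0 u)
      (aux_ii_abs_sub_rpow hr u u 1)]
    have e1 : ∫ v in (0:ℝ)..u, |u - v| ^ r = u ^ (r+1) / (r+1) := by
      rw [integral_congr (g := fun v => (u - v) ^ r) ?_]
      · rw [integral_comp_sub_left (fun x => x ^ r) u]
        simp only [sub_self, sub_zero]
        rw [integral_rpow (Or.inl hr)]
        rw [Real.zero_rpow (ne_of_gt hr1), sub_zero]
      · intro v hv
        rw [uIcc_of_le hu.1] at hv
        show |u - v| ^ r = (u - v) ^ r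
        rw [abs_of_nonneg (by linarith [hv.2] : (0:ℝ) ≤ u - v)]
    have e2 : ∫ v in u..(1:ℝ), |u - v| ^ r = (1-u) ^ (r+1) / (r+1) := by
      rw [integral_congr (g := fun v => (v - u) ^ r) ?_]
      · rw [integral_comp_sub_right (fun x => x ^ r) u]
        simp only [sub_self]
        rw [integral_rpow (Or.inl hr)]
        rw [Real.zero_rpow (ne_of_gt hr1), sub_zero]
      · intro v hv
        rw [uIcc_of_le hu.2] at hv
        show |u - v| ^ r = (v - u) ^ r
        rw [abs_sub_comm, abs_of_nonneg (by linarith [hv.1] : (0:ℝ) ≤ v - u)]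
    rw [e1, e2]
    have b1 : u ^ (r+1) ≤ 1 := Real.rpow_le_one hu.1 hu.2 (le_of_lt hr1)
    have b2 : (1-u) ^ (r+1) ≤ 1 := Real.rpow_le_one (by linarith [hu.2]) (by linarith [hu.1]) (le_of_lt hr1)
    rw [← add_div]
    gcongr
    linarith
  have hsub : ∫ v in a..b, |u - v| ^ r ≤ ∫ v in (0:ℝ)..1, |u - v| ^ r := by
    have nn : ∀ c d : ℝ, c ≤ d → 0 ≤ ∫ v in c..d, |u - v| ^ r := fun c d hcd =>
      integral_nonneg hcd (fun x _ => rpow_nonneg (abs_nonneg _) r)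
    rw [← integral_add_adjacent_intervals (aux_ii_abs_sub_rpow hr u 0 a)
      (aux_ii_abs_sub_rpow hr u a 1),
      ← integral_add_adjacent_intervals (aux_ii_abs_sub_rpow hr u a b)
      (aux_ii_abs_sub_rpow hr u b 1)]
    have := nn 0 a ha
    have := nn b 1 hb
    linarith
  linarith


section
variable {σ : ℝ → ℝ} {Λ r : ℝ}

lemma aux_F_meas (hσ : Measurable σ) (r : ℝ) :
    Measurable (fun p : ℝ × ℝ => σ p.1 * σ p.2 * |p.1 - p.2| ^ r) := by
  apply Measurable.mul
  · exact (hσ.comp measurable_fst).mul (hσ.comp measurable_snd)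
  · exact ((measurable_fst.sub measurable_snd).abs).pow measurable_const

lemma aux_uIoc_sub {a b : ℝ} (ha : a ∈ Icc (0:ℝ) 1) (hb : b ∈ Icc (0:ℝ) 1) :
    Set.uIoc a b ⊆ Icc (0:ℝ) 1 :=
  (Set.uIoc_subset_uIcc (α := ℝ) (a := a) (b := b) : Set.uIoc a b ⊆ uIcc a b).trans (uIcc_subset_Icc ha hb)
end

section
variable {σ : ℝ → ℝ} {Λ r : ℝ}

lemma aux_F_ii (hσ : Measurable σ) (hσbd : ∀ t ∈ Icc (0:ℝ) 1, 0 ≤ σ t ∧ σ t ≤ Λ)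
    (hr : -1 < r) {u a b : ℝ} (hu : u ∈ Icc (0:ℝ) 1) (ha : a ∈ Icc (0:ℝ) 1)
    (hb : b ∈ Icc (0:ℝ) 1) :
    IntervalIntegrable (fun v => σ u * σ v * |u - v| ^ r) volume a b := by
  refine ((aux_ii_abs_sub_rpow hr u a b).const_mul (Λ^2)).mono_fun' ?_ ?_
  · exact (((measurable_const.mul hσ).mul
      (((measurable_const.sub measurable_id).abs).pow measurable_const)).aestronglyMeasurable)
  · filter_upwards [ae_restrict_mem measurableSet_uIoc] with v hv
    have hv1 : v ∈ Icc (0:ℝ) 1 := aux_uIoc_sub ha hb hv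
    have h1 := hσbd u hu
    have h2 := hσbd v hv1
    have hψ : (0:ℝ) ≤ |u - v| ^ r := rpow_nonneg (abs_nonneg _) r
    rw [Real.norm_eq_abs, abs_mul, abs_of_nonneg hψ, abs_mul,
      abs_of_nonneg h1.1, abs_of_nonneg h2.1]
    have hσσ : σ u * σ v ≤ Λ^2 := by nlinarith [h1.1, h1.2, h2.1, h2.2]
    exact mul_le_mul_of_nonneg_right hσσ hψ

lemma aux_F_integral_nonneg (hσbd : ∀ t ∈ Icc (0:ℝ) 1, 0 ≤ σ t ∧ σ t ≤ Λ)
    {u a b : ℝ} (hu : u ∈ Icc (0:ℝ) 1) (ha : a ∈ Icc (0:ℝ) 1) (hb : b ∈ Icc (0:ℝ) 1)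
    (hab : a ≤ b) :
    0 ≤ ∫ v in a..b, σ u * σ v * |u - v| ^ r := by
  apply integral_nonneg hab
  intro v hv
  have hv1 : v ∈ Icc (0:ℝ) 1 := ⟨le_trans ha.1 hv.1, le_trans hv.2 hb.2⟩
  have h1 := hσbd u hu
  have h2 := hσbd v hv1
  have hψ : (0:ℝ) ≤ |u - v| ^ r := rpow_nonneg (abs_nonneg _) r
  exact mul_nonneg (mul_nonneg h1.1 h2.1) hψ

lemma aux_F_integral_le (hσ : Measurable σ) (hσbd : ∀ t ∈ Icc (0:ℝ) 1, 0 ≤ σ t ∧ σ t ≤ Λ)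
    (hr : -1 < r) {u a b : ℝ} (hu : u ∈ Icc (0:ℝ) 1) (ha : a ∈ Icc (0:ℝ) 1)
    (hb : b ∈ Icc (0:ℝ) 1) (hab : a ≤ b) :
    ∫ v in a..b, σ u * σ v * |u - v| ^ r ≤ Λ^2 * (2 / (r + 1)) := by
  have step1 : ∫ v in a..b, σ u * σ v * |u - v| ^ r
      ≤ ∫ v in a..b, Λ^2 * |u - v| ^ r := by
    apply integral_mono_on hab (aux_F_ii hσ hσbd hr hu ha hb)
      ((aux_ii_abs_sub_rpow hr u a b).const_mul (Λ^2))
    intro v hv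
    have hv1 : v ∈ Icc (0:ℝ) 1 := ⟨le_trans ha.1 hv.1, le_trans hv.2 hb.2⟩
    have h1 := hσbd u hu
    have h2 := hσbd v hv1
    have hψ : (0:ℝ) ≤ |u - v| ^ r := rpow_nonneg (abs_nonneg _) r
    have hσσ : σ u * σ v ≤ Λ^2 := by nlinarith [h1.1, h1.2, h2.1, h2.2]
    exact mul_le_mul_of_nonneg_right hσσ hψ
  have step2 : ∫ v in a..b, Λ^2 * |u - v| ^ r ≤ Λ^2 * (2 / (r + 1)) := by
    rw [intervalIntegral.integral_const_mul]
    apply mul_le_mul_of_nonneg_left _ (sq_nonneg Λ)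
    exact aux_integral_abs_sub_rpow_le hr hu ha.1 hab hb.2
  linarith

lemma aux_h_meas (hσ : Measurable σ) (r : ℝ) {a b : ℝ} (hab : a ≤ b) :
    Measurable (fun u => ∫ v in a..b, σ u * σ v * |u - v| ^ r) := by
  have : (fun u => ∫ v in a..b, σ u * σ v * |u - v| ^ r)
      = fun u => ∫ v in Ioc a b, σ u * σ v * |u - v| ^ r := by
    funext u; exact integral_of_le hab
  rw [this]
  exact (StronglyMeasurable.integral_prod_right'
    (ν := volume.restrict (Ioc a b)) ((aux_F_meas hσ r).stronglyMeasurable)).measurable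

lemma aux_h_ii (hσ : Measurable σ) (hσbd : ∀ t ∈ Icc (0:ℝ) 1, 0 ≤ σ t ∧ σ t ≤ Λ)
    (hr : -1 < r) {a b a' b' : ℝ} (ha : a ∈ Icc (0:ℝ) 1) (hb : b ∈ Icc (0:ℝ) 1)
    (hab : a ≤ b) (ha' : a' ∈ Icc (0:ℝ) 1) (hb' : b' ∈ Icc (0:ℝ) 1) :
    IntervalIntegrable (fun u => ∫ v in a..b, σ u * σ v * |u - v| ^ r) volume a' b' := by
  refine (_root_.intervalIntegrable_const (c := Λ^2 * (2 / (r + 1)))).mono_fun'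
    ((aux_h_meas hσ r hab).aestronglyMeasurable) ?_
  filter_upwards [ae_restrict_mem measurableSet_uIoc] with u hu
  have hu1 : u ∈ Icc (0:ℝ) 1 := aux_uIoc_sub ha' hb' hu
  rw [Real.norm_eq_abs, abs_of_nonneg (aux_F_integral_nonneg hσbd hu1 ha hb hab)]
  exact aux_F_integral_le hσ hσbd hr hu1 ha hb hab
end


section
variable {σ : ℝ → ℝ} {Λ r : ℝ}

lemma aux_swap (hσ : Measurable σ) (hσbd : ∀ t ∈ Icc (0:ℝ) 1, 0 ≤ σ t ∧ σ t ≤ Λ)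
    (hr : -1 < r) {a b a' b' : ℝ} (ha : a ∈ Icc (0:ℝ) 1) (hb : b ∈ Icc (0:ℝ) 1)
    (hab : a ≤ b) (ha' : a' ∈ Icc (0:ℝ) 1) (hb' : b' ∈ Icc (0:ℝ) 1) (hab' : a' ≤ b') :
    ∫ u in a'..b', ∫ v in a..b, σ u * σ v * |u - v| ^ r
      = ∫ v in a..b, ∫ u in a'..b', σ u * σ v * |u - v| ^ r := by
  have hIoc : ∀ {c d : ℝ}, c ∈ Icc (0:ℝ) 1 → d ∈ Icc (0:ℝ) 1 → Ioc c d ⊆ Icc (0:ℝ) 1 := by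
    intro c d hc hd x hx; exact ⟨le_trans hc.1 hx.1.le, le_trans hx.2 hd.2⟩
  have hFnn : ∀ u ∈ Icc (0:ℝ) 1, ∀ v ∈ Icc (0:ℝ) 1, 0 ≤ σ u * σ v * |u - v| ^ r := by
    intro u hu v hv
    exact mul_nonneg (mul_nonneg (hσbd u hu).1 (hσbd v hv).1) (rpow_nonneg (abs_nonneg _) r)
  have key : ∀ c d : ℝ, c ∈ Icc (0:ℝ) 1 → d ∈ Icc (0:ℝ) 1 → c ≤ d → ∀ u ∈ Icc (0:ℝ) 1,
      ENNReal.ofReal (∫ v in c..d, σ u * σ v * |u - v| ^ r)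
        = ∫⁻ v in Ioc c d, ENNReal.ofReal (σ u * σ v * |u - v| ^ r) := by
    intro c d hc hd hcd u hu
    rw [integral_of_le hcd]
    apply ofReal_integral_eq_lintegral_ofReal (aux_F_ii hσ hσbd hr hu hc hd).1
    filter_upwards [ae_restrict_mem measurableSet_Ioc] with v hv
    exact hFnn u hu v (hIoc hc hd hv)
  have hgcongr : ∀ v : ℝ, (∫ u in a'..b', σ u * σ v * |u - v| ^ r)
      = ∫ u in a'..b', σ v * σ u * |v - u| ^ r := by
    intro v
    apply integral_congr
    intro u _
    show σ u * σ v * |u - v| ^ r = σ v * σ u * |v - u| ^ r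
    rw [abs_sub_comm]; ring
  have L1 : ∫ u in a'..b', ∫ v in a..b, σ u * σ v * |u - v| ^ r
      = (∫⁻ u in Ioc a' b', ∫⁻ v in Ioc a b,
          ENNReal.ofReal (σ u * σ v * |u - v| ^ r)).toReal := by
    rw [integral_of_le hab', integral_eq_lintegral_of_nonneg_ae ?_ ?_]
    · congr 1
      apply lintegral_congr_ae
      filter_upwards [ae_restrict_mem measurableSet_Ioc] with u hu
      exact key a b ha hb hab u (hIoc ha' hb' hu)
    · filter_upwards [ae_restrict_mem measurableSet_Ioc] with u hu
      exact aux_F_integral_nonneg hσbd (hIoc ha' hb' hu) ha hb hab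
    · exact (aux_h_meas hσ r hab).aestronglyMeasurable
  have R1 : ∫ v in a..b, ∫ u in a'..b', σ u * σ v * |u - v| ^ r
      = (∫⁻ v in Ioc a b, ∫⁻ u in Ioc a' b',
          ENNReal.ofReal (σ u * σ v * |u - v| ^ r)).toReal := by
    rw [integral_of_le hab, integral_eq_lintegral_of_nonneg_ae ?_ ?_]
    · congr 1
      apply lintegral_congr_ae
      filter_upwards [ae_restrict_mem measurableSet_Ioc] with v hv
      rw [hgcongr v, key a' b' ha' hb' hab' v (hIoc ha hb hv)]
      apply lintegral_congr
      intro u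
      congr 1
      rw [abs_sub_comm]; ring
    · filter_upwards [ae_restrict_mem measurableSet_Ioc] with v hv
      rw [hgcongr v]
      exact aux_F_integral_nonneg hσbd (hIoc ha hb hv) ha' hb' hab'
    · have he : (fun v => ∫ u in a'..b', σ u * σ v * |u - v| ^ r)
          = fun v => ∫ u in a'..b', σ v * σ u * |v - u| ^ r := funext hgcongr
      rw [he]
      exact (aux_h_meas hσ r hab').aestronglyMeasurable
  rw [L1, R1]
  congr 1
  exact lintegral_lintegral_swap (((aux_F_meas hσ r).ennreal_ofReal).aemeasurable)
end


section
variable {σ : ℝ → ℝ} {Λ r : ℝ}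

lemma aux_sym_fun (p q : ℝ) :
    (fun v => ∫ u in p..q, σ u * σ v * |u - v| ^ r)
      = (fun v => ∫ u in p..q, σ v * σ u * |v - u| ^ r) := by
  funext v
  apply integral_congr
  intro u _
  show σ u * σ v * |u - v| ^ r = σ v * σ u * |v - u| ^ r
  rw [abs_sub_comm]; ring

lemma aux_outer_bound (hσ : Measurable σ) (hσbd : ∀ t ∈ Icc (0:ℝ) 1, 0 ≤ σ t ∧ σ t ≤ Λ)
    (hr : -1 < r) {a b p q : ℝ} (ha : a ∈ Icc (0:ℝ) 1) (hb : b ∈ Icc (0:ℝ) 1) (hab : a ≤ b)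
    (hp : p ∈ Icc (0:ℝ) 1) (hq : q ∈ Icc (0:ℝ) 1) (hpq : p ≤ q) :
    0 ≤ ∫ u in p..q, (∫ v in a..b, σ u * σ v * |u - v| ^ r) ∧
      ∫ u in p..q, (∫ v in a..b, σ u * σ v * |u - v| ^ r)
        ≤ (q - p) * (Λ^2 * (2 / (r + 1))) := by
  constructor
  · apply integral_nonneg hpq
    intro u hu
    exact aux_F_integral_nonneg hσbd ⟨le_trans hp.1 hu.1, le_trans hu.2 hq.2⟩ ha hb hab
  · calc ∫ u in p..q, (∫ v in a..b, σ u * σ v * |u - v| ^ r)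
        ≤ ∫ _ in p..q, Λ^2 * (2 / (r + 1)) := by
          apply integral_mono_on hpq (aux_h_ii hσ hσbd hr ha hb hab hp hq)
            intervalIntegrable_const
          intro u hu
          exact aux_F_integral_le hσ hσbd hr ⟨le_trans hp.1 hu.1, le_trans hu.2 hq.2⟩ ha hb hab
    _ = (q - p) * (Λ^2 * (2 / (r + 1))) := by rw [intervalIntegral.integral_const]; simp [smul_eq_mul]

lemma aux_inner_split (hσ : Measurable σ) (hσbd : ∀ t ∈ Icc (0:ℝ) 1, 0 ≤ σ t ∧ σ t ≤ Λ)
    (hr : -1 < r) {s t t' : ℝ} (hs : s ∈ Icc (0:ℝ) 1) (ht : t ∈ Icc (0:ℝ) 1)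
    (ht' : t' ∈ Icc (0:ℝ) 1) (htt' : t ≤ t') :
    (∫ u in (0:ℝ)..s, ∫ v in (0:ℝ)..t', σ u * σ v * |u - v| ^ r)
      - (∫ u in (0:ℝ)..s, ∫ v in (0:ℝ)..t, σ u * σ v * |u - v| ^ r)
      = ∫ u in (0:ℝ)..s, (∫ v in t..t', σ u * σ v * |u - v| ^ r) := by
  have h01 : (0:ℝ) ∈ Icc (0:ℝ) 1 := ⟨le_refl 0, zero_le_one⟩
  have hsplit : ∫ u in (0:ℝ)..s, (∫ v in (0:ℝ)..t', σ u * σ v * |u - v| ^ r)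
      = ∫ u in (0:ℝ)..s, ((∫ v in (0:ℝ)..t, σ u * σ v * |u - v| ^ r)
          + (∫ v in t..t', σ u * σ v * |u - v| ^ r)) := by
    apply integral_congr
    intro u hu
    rw [uIcc_of_le hs.1] at hu
    have hu1 : u ∈ Icc (0:ℝ) 1 := ⟨hu.1, le_trans hu.2 hs.2⟩
    exact (integral_add_adjacent_intervals (aux_F_ii hσ hσbd hr hu1 h01 ht)
      (aux_F_ii hσ hσbd hr hu1 ht ht')).symm
  rw [hsplit, integral_add (aux_h_ii hσ hσbd hr h01 ht ht.1 h01 hs)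
    (aux_h_ii hσ hσbd hr ht ht' htt' h01 hs)]
  ring

lemma aux_outer_split (hσ : Measurable σ) (hσbd : ∀ t ∈ Icc (0:ℝ) 1, 0 ≤ σ t ∧ σ t ≤ Λ)
    (hr : -1 < r) {s s' t : ℝ} (hs : s ∈ Icc (0:ℝ) 1) (hs' : s' ∈ Icc (0:ℝ) 1)
    (hss' : s ≤ s') (ht : t ∈ Icc (0:ℝ) 1) :
    (∫ u in (0:ℝ)..s', ∫ v in (0:ℝ)..t, σ u * σ v * |u - v| ^ r)
      - (∫ u in (0:ℝ)..s, ∫ v in (0:ℝ)..t, σ u * σ v * |u - v| ^ r)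
      = ∫ u in s..s', (∫ v in (0:ℝ)..t, σ u * σ v * |u - v| ^ r) := by
  have h01 : (0:ℝ) ∈ Icc (0:ℝ) 1 := ⟨le_refl 0, zero_le_one⟩
  rw [← integral_add_adjacent_intervals (aux_h_ii hσ hσbd hr h01 ht ht.1 h01 hs)
    (aux_h_ii hσ hσbd hr h01 ht ht.1 hs hs')]
  ring
end

section
variable {σ : ℝ → ℝ} {Λ r : ℝ}

lemma aux_rect_eq (hσ : Measurable σ) (hσbd : ∀ t ∈ Icc (0:ℝ) 1, 0 ≤ σ t ∧ σ t ≤ Λ)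
    (hr : -1 < r) {s s' t t' : ℝ} (hs : s ∈ Icc (0:ℝ) 1) (hs' : s' ∈ Icc (0:ℝ) 1)
    (hss' : s ≤ s') (ht : t ∈ Icc (0:ℝ) 1) (ht' : t' ∈ Icc (0:ℝ) 1) (htt' : t ≤ t') :
    ((∫ u in (0:ℝ)..s', ∫ v in (0:ℝ)..t', σ u * σ v * |u - v| ^ r)
        - (∫ u in (0:ℝ)..s', ∫ v in (0:ℝ)..t, σ u * σ v * |u - v| ^ r))
      - ((∫ u in (0:ℝ)..s, ∫ v in (0:ℝ)..t', σ u * σ v * |u - v| ^ r)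
        - (∫ u in (0:ℝ)..s, ∫ v in (0:ℝ)..t, σ u * σ v * |u - v| ^ r))
      = ∫ u in s..s', (∫ v in t..t', σ u * σ v * |u - v| ^ r) := by
  have h01 : (0:ℝ) ∈ Icc (0:ℝ) 1 := ⟨le_refl _, zero_le_one⟩
  rw [aux_inner_split hσ hσbd hr hs' ht ht' htt', aux_inner_split hσ hσbd hr hs ht ht' htt',
    ← integral_add_adjacent_intervals (aux_h_ii hσ hσbd hr ht ht' htt' h01 hs)
      (aux_h_ii hσ hσbd hr ht ht' htt' hs hs')]
  ring

lemma aux_delta (hσ : Measurable σ) (hσbd : ∀ t ∈ Icc (0:ℝ) 1, 0 ≤ σ t ∧ σ t ≤ Λ)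
    (hr : -1 < r) {s s' : ℝ} (hs : s ∈ Icc (0:ℝ) 1) (hs' : s' ∈ Icc (0:ℝ) 1) (hss' : s ≤ s') :
    0 ≤ (∫ u in (0:ℝ)..s', ∫ v in (0:ℝ)..s', σ u * σ v * |u - v| ^ r)
        - (∫ u in (0:ℝ)..s, ∫ v in (0:ℝ)..s, σ u * σ v * |u - v| ^ r) ∧
      (∫ u in (0:ℝ)..s', ∫ v in (0:ℝ)..s', σ u * σ v * |u - v| ^ r)
        - (∫ u in (0:ℝ)..s, ∫ v in (0:ℝ)..s, σ u * σ v * |u - v| ^ r)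
        ≤ (s' - s) * (2 * (Λ^2 * (2 / (r + 1)))) := by
  have h01 : (0:ℝ) ∈ Icc (0:ℝ) 1 := ⟨le_refl _, zero_le_one⟩
  have e1 := aux_outer_split hσ hσbd hr hs hs' hss' hs'
  have e2 := aux_inner_split hσ hσbd hr hs hs hs' hss'
  have b1 := aux_outer_bound hσ hσbd hr h01 hs' hs'.1 hs hs' hss'
  have e3 : (∫ u in (0:ℝ)..s, ∫ v in s..s', σ u * σ v * |u - v| ^ r)
      = ∫ v in s..s', ∫ u in (0:ℝ)..s, σ u * σ v * |u - v| ^ r :=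
    aux_swap hσ hσbd hr hs hs' hss' h01 hs hs.1
  have e4 : (∫ v in s..s', ∫ u in (0:ℝ)..s, σ u * σ v * |u - v| ^ r)
      = ∫ v in s..s', ∫ u in (0:ℝ)..s, σ v * σ u * |v - u| ^ r :=
    congrArg (fun f => ∫ v in s..s', f v) (aux_sym_fun (σ := σ) (r := r) 0 s)
  have b2 := aux_outer_bound hσ hσbd hr h01 hs hs.1 hs hs' hss'
  constructor
  · linarith [b1.1, b2.1]
  · linarith [b1.2, b2.2]
end


lemma aux_integrable_mul {Ω : Type*} [MeasurableSpace Ω] {P : Measure Ω} {f g : Ω → ℝ}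
    (hf : MemLp f 2 P) (hg : MemLp g 2 P) : Integrable (fun ω => f ω * g ω) P := by
  have h1 := hf.integrable_sq
  have h2 := hg.integrable_sq
  have h3 : Integrable (fun ω => (f ω ^ 2 + g ω ^ 2) / 2) P := (h1.add h2).div_const 2
  refine h3.mono' (hf.1.mul hg.1) (ae_of_all _ fun ω => ?_)
  rw [Real.norm_eq_abs, abs_mul]
  nlinarith [sq_nonneg (|f ω| - |g ω|), abs_nonneg (f ω), abs_nonneg (g ω),
    sq_abs (f ω), sq_abs (g ω)]

lemma aux_memLp_id_gaussian (v : ℝ≥0) : MemLp (id : ℝ → ℝ) 2 (gaussianReal 0 v) := by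
  by_cases hv : v = 0
  · subst hv
    rw [gaussianReal_zero_var]
    exact (memLp_const (0:ℝ)).ae_eq (ae_eq_dirac (id : ℝ → ℝ)).symm
  · rw [memLp_two_iff_integrable_sq aestronglyMeasurable_id,
      gaussianReal_of_var_ne_zero 0 hv,
      integrable_withDensity_iff (measurable_gaussianPDF 0 v)
        (ae_of_all _ fun _ => ENNReal.ofReal_lt_top)]
    have hv' : (0:ℝ) < v := NNReal.coe_pos.2 (pos_iff_ne_zero.mpr hv)
    have hb : (0:ℝ) < (2 * (v:ℝ))⁻¹ := by positivity
    have h := (integrable_rpow_mul_exp_neg_mul_sq hb (by norm_num : (-1:ℝ) < 2)).const_mul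
      ((Real.sqrt (2 * Real.pi * v))⁻¹)
    refine h.congr (ae_of_all _ fun x => ?_)
    show (√(2 * π * (v:ℝ)))⁻¹ * (x ^ (2:ℝ) * rexp (-(2 * (v:ℝ))⁻¹ * x ^ 2))
      = id x ^ 2 * (gaussianPDF 0 v x).toReal
    rw [show gaussianPDF 0 v x = ENNReal.ofReal (gaussianPDFReal 0 v x) from rfl,
      ENNReal.toReal_ofReal (gaussianPDFReal_nonneg 0 v x), gaussianPDFReal]
    rw [show x ^ (2:ℝ) = x ^ 2 by rw [← Real.rpow_natCast x 2]; norm_num]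
    rw [sub_zero]
    rw [show -(2 * (v:ℝ))⁻¹ * x ^ 2 = -x ^ 2 / (2 * (v:ℝ)) by field_simp]
    simp only [id_eq]
    ring

lemma aux_integral_comb {Ω : Type*} [MeasurableSpace Ω] (P : Measure Ω) {f1 f2 f3 f4 : Ω → ℝ}
    (h1 : Integrable f1 P) (h2 : Integrable f2 P) (h3 : Integrable f3 P)
    (h4 : Integrable f4 P) :
    ∫ ω, (f1 ω - (f2 ω + (f3 ω - f4 ω))) ∂P
      = (∫ ω, f1 ω ∂P) - ((∫ ω, f2 ω ∂P) + ((∫ ω, f3 ω ∂P) - ∫ ω, f4 ω ∂P)) := by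
  have h34 : Integrable (fun ω => f3 ω - f4 ω) P := h3.sub h4
  have h234 : Integrable (fun ω => f2 ω + (f3 ω - f4 ω)) P := h2.add h34
  rw [integral_sub h1 h234, integral_add h2 h34, integral_sub h3 h4]


/-- The cross term G_N = N^{2H-1/2} sum eta delta for the
time-varying volatility model converges to 0 in L2(P). -/
theorem cross_term_time_varying_tendsto_zero_L2
    {Ω : Type*} [MeasurableSpace Ω] (P : Measure Ω) [IsProbabilityMeasure P]
    (H : ℝ) (hH : H ∈ Set.Ioo (1/2 : ℝ) (3/4))
    (Λ : ℝ) (hΛ : 0 < Λ)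
    (σ : ℝ → ℝ) (hσmeas : Measurable σ)
    (hσbd : ∀ t ∈ Set.Icc (0:ℝ) 1, 0 ≤ σ t ∧ σ t ≤ Λ)
    (G : ℝ → Ω → ℝ)
    (hGauss : ∀ (n : ℕ) (a : Fin n → ℝ) (t : Fin n → ℝ),
      (∀ i, t i ∈ Set.Icc (0:ℝ) 1) →
      ∃ v : ℝ≥0, P.map (fun ω => ∑ i, a i * G (t i) ω) = gaussianReal 0 v)
    (hGCov : ∀ s t : ℝ, s ∈ Set.Icc (0:ℝ) 1 → t ∈ Set.Icc (0:ℝ) 1 →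
      ∫ ω, G s ω * G t ω ∂P = H * (2*H - 1) *
        ∫ u in (0:ℝ)..s, ∫ v in (0:ℝ)..t, σ u * σ v * |u - v| ^ (2*H - 2))
    -- increments η_k and variance increments δ_k
    (η : ℕ → ℕ → Ω → ℝ)
    (hη : ∀ (N k : ℕ) (ω : Ω), η N k ω = G (((k : ℝ) + 1)/N) ω - G ((k : ℝ)/N) ω)
    (δ : ℕ → ℕ → ℝ)
    (hδ : ∀ N k : ℕ, δ N k =
      (∫ ω, (G (((k : ℝ) + 1)/N) ω)^2 ∂P) - ∫ ω, (G ((k : ℝ)/N) ω)^2 ∂P) :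
    Tendsto (fun N : ℕ =>
        ∫ ω, ((N : ℝ) ^ (2*H - 1/2) * ∑ k ∈ Finset.range N, η N k ω * δ N k)^2 ∂P)
      atTop (𝓝 0) := by
  obtain ⟨hH1, hH2⟩ := hH
  have hr : (-1:ℝ) < 2*H - 2 := by linarith
  have hc : (0:ℝ) < H * (2*H - 1) := by nlinarith
  set c : ℝ := H * (2*H - 1) with hcdef
  set M : ℝ := Λ^2 * (2 / (2*H - 2 + 1)) with hMdef
  have hM0 : 0 ≤ M := by
    have h1 : (0:ℝ) < 2*H - 2 + 1 := by linarith
    have h2 : (0:ℝ) < 2 / (2*H - 2 + 1) := div_pos two_pos h1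
    exact mul_nonneg (sq_nonneg Λ) h2.le
  have h01 : (0:ℝ) ∈ Set.Icc (0:ℝ) 1 := ⟨le_refl _, zero_le_one⟩
  have h11 : (1:ℝ) ∈ Set.Icc (0:ℝ) 1 := ⟨zero_le_one, le_refl _⟩
  -- L² membership of the marginals
  have hmem : ∀ t ∈ Set.Icc (0:ℝ) 1, MemLp (G t) 2 P := by
    intro t ht
    obtain ⟨v, hv⟩ := hGauss 1 (fun _ => (1:ℝ)) (fun _ => t) (fun _ => ht)
    have hsum : (fun ω => ∑ i : Fin 1, (fun _ => (1:ℝ)) i * G ((fun _ => t) i) ω) = G t := by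
      funext ω; simp
    rw [hsum] at hv
    have hae : AEMeasurable (G t) P := by
      by_contra hae
      rw [Measure.map_of_not_aemeasurable hae] at hv
      have h1 : (gaussianReal 0 v) Set.univ = 1 := measure_univ
      rw [← hv] at h1
      simp at h1
    have hLp := aux_memLp_id_gaussian v
    rw [← hv] at hLp
    exact (memLp_map_measure_iff aestronglyMeasurable_id hae).mp hLp
  have hprod : ∀ s ∈ Set.Icc (0:ℝ) 1, ∀ t ∈ Set.Icc (0:ℝ) 1,
      Integrable (fun ω => G s ω * G t ω) P :=
    fun s hs t ht => aux_integrable_mul (hmem s hs) (hmem t ht)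
  have hsq : ∀ s ∈ Set.Icc (0:ℝ) 1, ∫ ω, (G s ω)^2 ∂P
      = c * ∫ u in (0:ℝ)..s, ∫ v in (0:ℝ)..s, σ u * σ v * |u - v| ^ (2*H-2) := by
    intro s hs
    simp_rw [pow_two]
    exact hGCov s s hs hs
  set E : ℕ → ℝ := fun N =>
      ∫ ω, ((N : ℝ) ^ (2*H - 1/2) * ∑ k ∈ Finset.range N, η N k ω * δ N k)^2 ∂P with hEdef
  have key : ∀ N : ℕ, 1 ≤ N →
      0 ≤ E N ∧ E N ≤ ((c*(2*M))^2 * (c*M)) * (N:ℝ)^(4*H-3) := by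
    intro N hN
    have hNpos : (0:ℝ) < (N:ℝ) := by
      have : 0 < N := by omega
      exact_mod_cast this
    refine ⟨MeasureTheory.integral_nonneg fun ω => sq_nonneg _, ?_⟩
    have hτ : ∀ k : ℕ, k ≤ N → ((k:ℝ)/N) ∈ Set.Icc (0:ℝ) 1 := by
      intro k hk
      constructor
      · positivity
      · rw [div_le_one hNpos]; exact_mod_cast hk
    have hstep : ∀ k : ℕ, ((k:ℝ)+1)/(N:ℝ) = ((k+1 : ℕ):ℝ)/N := by
      intro k; push_cast; ring
    have hmono : ∀ k : ℕ, ((k:ℝ)/N) ≤ (((k+1:ℕ)):ℝ)/N := by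
      intro k
      have h1 : (k:ℝ) ≤ ((k+1:ℕ):ℝ) := by exact_mod_cast Nat.le_succ k
      have h2 := mul_le_mul_of_nonneg_right h1 (le_of_lt (inv_pos.2 hNpos))
      simpa [div_eq_mul_inv] using h2
    have hηfun : ∀ k : ℕ, η N k = fun ω => G (((k+1:ℕ):ℝ)/N) ω - G ((k:ℝ)/N) ω := by
      intro k; funext ω; rw [hη, hstep]
    have hηmem : ∀ k, k < N → MemLp (η N k) 2 P := by
      intro k hk
      rw [hηfun k]
      exact (hmem _ (hτ (k+1) (by omega))).sub (hmem _ (hτ k (by omega)))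
    have hIntEta : ∀ k, k < N → ∀ j, j < N → Integrable (fun ω => η N k ω * η N j ω) P :=
      fun k hk j hj => aux_integrable_mul (hηmem k hk) (hηmem j hj)
    -- Step 1: pull out the normalisation constant
    have hE1 : E N = ((N:ℝ) ^ (2*H - 1/2))^2
        * ∫ ω, (∑ k ∈ Finset.range N, η N k ω * δ N k)^2 ∂P := by
      simp only [hEdef]
      rw [← MeasureTheory.integral_const_mul]
      exact integral_congr_ae (Filter.Eventually.of_forall fun ω => by ring)
    -- Step 2: expand the square of the sum
    have hE2 : ∫ ω, (∑ k ∈ Finset.range N, η N k ω * δ N k)^2 ∂P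
        = ∑ k ∈ Finset.range N, ∑ j ∈ Finset.range N,
            δ N k * δ N j * ∫ ω, η N k ω * η N j ω ∂P := by
      have e : (fun ω => (∑ k ∈ Finset.range N, η N k ω * δ N k)^2)
          = fun ω => ∑ k ∈ Finset.range N, ∑ j ∈ Finset.range N,
              δ N k * δ N j * (η N k ω * η N j ω) := by
        funext ω
        rw [pow_two, Finset.sum_mul_sum]
        exact Finset.sum_congr rfl fun k _ => Finset.sum_congr rfl fun j _ => by ring
      rw [e, MeasureTheory.integral_finset_sum _ (fun k hk => integrable_finset_sum _
        (fun j hj => (hIntEta k (Finset.mem_range.mp hk) j (Finset.mem_range.mp hj)).const_mul _))]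
      refine Finset.sum_congr rfl fun k hk => ?_
      rw [MeasureTheory.integral_finset_sum _
        (fun j hj => (hIntEta k (Finset.mem_range.mp hk) j (Finset.mem_range.mp hj)).const_mul _)]
      exact Finset.sum_congr rfl fun j hj => MeasureTheory.integral_const_mul _ _
    -- Step 3: value of the covariances of increments
    have hCval : ∀ k, k < N → ∀ j, j < N →
        ∫ ω, η N k ω * η N j ω ∂P
          = c * ∫ u in ((k:ℝ)/N)..(((k+1:ℕ):ℝ)/N),
              (∫ v in ((j:ℝ)/N)..(((j+1:ℕ):ℝ)/N), σ u * σ v * |u - v| ^ (2*H-2)) := by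
      intro k hk j hj
      have hk1 := hτ (k+1) (by omega); have hk0 := hτ k (by omega)
      have hj1 := hτ (j+1) (by omega); have hj0 := hτ j (by omega)
      have e : (fun ω => η N k ω * η N j ω)
          = fun ω => G (((k+1:ℕ):ℝ)/N) ω * G (((j+1:ℕ):ℝ)/N) ω
              - (G (((k+1:ℕ):ℝ)/N) ω * G ((j:ℝ)/N) ω
                + (G ((k:ℝ)/N) ω * G (((j+1:ℕ):ℝ)/N) ω
                  - G ((k:ℝ)/N) ω * G ((j:ℝ)/N) ω)) := by
        funext ω; rw [hηfun k, hηfun j]; ring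
      rw [e, aux_integral_comb P (hprod _ hk1 _ hj1) (hprod _ hk1 _ hj0)
          (hprod _ hk0 _ hj1) (hprod _ hk0 _ hj0),
        hGCov _ _ hk1 hj1, hGCov _ _ hk1 hj0, hGCov _ _ hk0 hj1, hGCov _ _ hk0 hj0]
      rw [← aux_rect_eq hσmeas hσbd hr hk0 hk1 (hmono k) hj0 hj1 (hmono j)]
      ring
    have hCpos : ∀ k, k < N → ∀ j, j < N → 0 ≤ ∫ ω, η N k ω * η N j ω ∂P := by
      intro k hk j hj
      rw [hCval k hk j hj]
      exact mul_nonneg hc.le (aux_outer_bound hσmeas hσbd hr (hτ j (by omega))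
        (hτ (j+1) (by omega)) (hmono j) (hτ k (by omega)) (hτ (k+1) (by omega)) (hmono k)).1
    -- Step 4: bounds on δ
    have hδbd : ∀ k, k < N → 0 ≤ δ N k ∧ δ N k ≤ c * (2*M) / N := by
      intro k hk
      have hk1 := hτ (k+1) (by omega); have hk0 := hτ k (by omega)
      have hδval : δ N k
          = c * ((∫ u in (0:ℝ)..(((k+1:ℕ):ℝ)/N), ∫ v in (0:ℝ)..(((k+1:ℕ):ℝ)/N),
                σ u * σ v * |u - v| ^ (2*H-2))
            - ∫ u in (0:ℝ)..((k:ℝ)/N), ∫ v in (0:ℝ)..((k:ℝ)/N),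
                σ u * σ v * |u - v| ^ (2*H-2)) := by
        rw [hδ N k, hstep k, hsq _ hk1, hsq _ hk0]; ring
      have hd := aux_delta hσmeas hσbd hr hk0 hk1 (hmono k)
      rw [← hMdef] at hd
      have hgap : ((k+1:ℕ):ℝ)/N - (k:ℝ)/N = 1/N := by push_cast; ring
      constructor
      · rw [hδval]; exact mul_nonneg hc.le hd.1
      · rw [hδval]
        have hd2 := hd.2
        rw [hgap] at hd2
        calc c * _ ≤ c * (1/N * (2*M)) := mul_le_mul_of_nonneg_left hd2 hc.le
          _ = c * (2*M) / N := by ring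
    -- Step 5: telescoping bound on the total sum of covariances
    have hTel : ∀ ω, ∑ k ∈ Finset.range N, η N k ω = G 1 ω - G 0 ω := by
      intro ω
      calc ∑ k ∈ Finset.range N, η N k ω
          = ∑ k ∈ Finset.range N, (G (((k+1:ℕ):ℝ)/N) ω - G ((k:ℝ)/N) ω) :=
            Finset.sum_congr rfl fun k _ => by rw [hηfun k]
        _ = G ((N:ℝ)/N) ω - G (((0:ℕ):ℝ)/N) ω :=
            Finset.sum_range_sub (fun k => G ((k:ℝ)/N) ω) N
        _ = G 1 ω - G 0 ω := by
            rw [div_self (ne_of_gt hNpos)]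
            norm_num
    have hWle : ∑ k ∈ Finset.range N, ∑ j ∈ Finset.range N,
        ∫ ω, η N k ω * η N j ω ∂P ≤ c * M := by
      have hsum_eq : ∑ k ∈ Finset.range N, ∑ j ∈ Finset.range N,
          ∫ ω, η N k ω * η N j ω ∂P = ∫ ω, (G 1 ω - G 0 ω) * (G 1 ω - G 0 ω) ∂P := by
        have e : (fun ω => (G 1 ω - G 0 ω) * (G 1 ω - G 0 ω))
            = fun ω => ∑ k ∈ Finset.range N, ∑ j ∈ Finset.range N, η N k ω * η N j ω := by
          funext ω
          rw [← hTel ω, Finset.sum_mul_sum]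
        rw [e, MeasureTheory.integral_finset_sum _ (fun k hk => integrable_finset_sum _
          (fun j hj => hIntEta k (Finset.mem_range.mp hk) j (Finset.mem_range.mp hj)))]
        refine Finset.sum_congr rfl fun k hk => ?_
        rw [MeasureTheory.integral_finset_sum _
          (fun j hj => hIntEta k (Finset.mem_range.mp hk) j (Finset.mem_range.mp hj))]
      rw [hsum_eq]
      have eW : (fun ω => (G 1 ω - G 0 ω) * (G 1 ω - G 0 ω))
          = fun ω => G 1 ω * G 1 ω
              - (G 1 ω * G 0 ω + (G 0 ω * G 1 ω - G 0 ω * G 0 ω)) := by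
        funext ω; ring
      rw [eW, aux_integral_comb P (hprod _ h11 _ h11) (hprod _ h11 _ h01)
          (hprod _ h01 _ h11) (hprod _ h01 _ h01),
        hGCov _ _ h11 h11, hGCov _ _ h11 h01, hGCov _ _ h01 h11, hGCov _ _ h01 h01]
      have hz1 : (∫ u in (0:ℝ)..1, ∫ v in (0:ℝ)..(0:ℝ), σ u * σ v * |u - v| ^ (2*H-2)) = 0 := by
        simp
      have hz2 : (∫ u in (0:ℝ)..(0:ℝ), ∫ v in (0:ℝ)..1, σ u * σ v * |u - v| ^ (2*H-2)) = 0 := by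
        simp
      have hz3 : (∫ u in (0:ℝ)..(0:ℝ), ∫ v in (0:ℝ)..(0:ℝ), σ u * σ v * |u - v| ^ (2*H-2)) = 0 := by
        simp
      rw [hz1, hz2, hz3]
      have hb := (aux_outer_bound hσmeas hσbd hr h01 h11 zero_le_one h01 h11 zero_le_one).2
      rw [← hMdef] at hb
      have hb' : (∫ u in (0:ℝ)..1, ∫ v in (0:ℝ)..1, σ u * σ v * |u - v| ^ (2*H-2)) ≤ M := by
        calc (∫ u in (0:ℝ)..1, ∫ v in (0:ℝ)..1, σ u * σ v * |u - v| ^ (2*H-2))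
            ≤ (1 - 0) * M := hb
          _ = M := by ring
      calc c * (∫ u in (0:ℝ)..1, ∫ v in (0:ℝ)..1, σ u * σ v * |u - v| ^ (2*H-2))
          - (c * 0 + (c * 0 - c * 0)) 
          = c * (∫ u in (0:ℝ)..1, ∫ v in (0:ℝ)..1, σ u * σ v * |u - v| ^ (2*H-2)) := by ring
        _ ≤ c * M := mul_le_mul_of_nonneg_left hb' hc.le
    -- Step 6: combine
    have hstep1 : ∑ k ∈ Finset.range N, ∑ j ∈ Finset.range N,
        δ N k * δ N j * ∫ ω, η N k ω * η N j ω ∂P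
          ≤ (c*(2*M)/N)^2 * (c*M) := by
      have h1 : ∑ k ∈ Finset.range N, ∑ j ∈ Finset.range N,
          δ N k * δ N j * ∫ ω, η N k ω * η N j ω ∂P
            ≤ ∑ k ∈ Finset.range N, ∑ j ∈ Finset.range N,
              (c*(2*M)/N)^2 * ∫ ω, η N k ω * η N j ω ∂P := by
        refine Finset.sum_le_sum fun k hk => Finset.sum_le_sum fun j hj => ?_
        have hdk := hδbd k (Finset.mem_range.mp hk)
        have hdj := hδbd j (Finset.mem_range.mp hj)
        have hC := hCpos k (Finset.mem_range.mp hk) j (Finset.mem_range.mp hj)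
        have hB : 0 ≤ c*(2*M)/(N:ℝ) := le_trans hdk.1 hdk.2
        have s1 : δ N k * δ N j ≤ (c*(2*M)/N) * δ N j :=
          mul_le_mul_of_nonneg_right hdk.2 hdj.1
        have s2 : (c*(2*M)/(N:ℝ)) * δ N j ≤ (c*(2*M)/N) * (c*(2*M)/N) :=
          mul_le_mul_of_nonneg_left hdj.2 hB
        calc δ N k * δ N j * ∫ ω, η N k ω * η N j ω ∂P
            ≤ ((c*(2*M)/N) * (c*(2*M)/N)) * ∫ ω, η N k ω * η N j ω ∂P :=
              mul_le_mul_of_nonneg_right (le_trans s1 s2) hC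
          _ = (c*(2*M)/N)^2 * ∫ ω, η N k ω * η N j ω ∂P := by ring
      have h2 : ∑ k ∈ Finset.range N, ∑ j ∈ Finset.range N,
          (c*(2*M)/N)^2 * ∫ ω, η N k ω * η N j ω ∂P
            = (c*(2*M)/N)^2 * ∑ k ∈ Finset.range N, ∑ j ∈ Finset.range N,
                ∫ ω, η N k ω * η N j ω ∂P := by
        rw [Finset.mul_sum]
        exact Finset.sum_congr rfl fun k _ => (Finset.mul_sum _ _ _).symm
      have h3 : (c*(2*M)/N)^2 * (∑ k ∈ Finset.range N, ∑ j ∈ Finset.range N,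
          ∫ ω, η N k ω * η N j ω ∂P) ≤ (c*(2*M)/N)^2 * (c*M) :=
        mul_le_mul_of_nonneg_left hWle (sq_nonneg _)
      linarith [h1, h2.le, h2.ge, h3]
    have hpow : ((N:ℝ) ^ (2*H - 1/2))^2 = (N:ℝ)^(4*H-1) := by
      rw [show (4*H-1:ℝ) = (2*H-1/2) + (2*H-1/2) by ring, Real.rpow_add hNpos, pow_two]
    have harr : (N:ℝ)^(4*H-1) * ((c*(2*M)/N)^2 * (c*M))
        = ((c*(2*M))^2 * (c*M)) * (N:ℝ)^(4*H-3) := by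
      have hN2 : ((N:ℝ))^(2:ℕ) ≠ 0 := by positivity
      have hsplit : (N:ℝ)^(4*H-1) = (N:ℝ)^(4*H-3) * (N:ℝ)^(2:ℕ) := by
        rw [← Real.rpow_natCast (N:ℝ) 2, ← Real.rpow_add hNpos]
        congr 1
        push_cast
        ring
      rw [hsplit, div_pow]
      field_simp
    calc E N = ((N:ℝ) ^ (2*H - 1/2))^2 * (∑ k ∈ Finset.range N, ∑ j ∈ Finset.range N,
          δ N k * δ N j * ∫ ω, η N k ω * η N j ω ∂P) := by rw [hE1, hE2]
      _ ≤ ((N:ℝ) ^ (2*H - 1/2))^2 * ((c*(2*M)/N)^2 * (c*M)) :=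
          mul_le_mul_of_nonneg_left hstep1 (sq_nonneg _)
      _ = ((c*(2*M))^2 * (c*M)) * (N:ℝ)^(4*H-3) := by rw [hpow]; exact harr
  -- squeeze
  have hlim : Tendsto (fun N : ℕ => ((c*(2*M))^2 * (c*M)) * (N:ℝ)^(4*H-3)) atTop (𝓝 0) := by
    have h0 : Tendsto (fun x : ℝ => x^(4*H-3)) atTop (𝓝 0) := by
      have h1 := tendsto_rpow_neg_atTop (by linarith : (0:ℝ) < 3-4*H)
      have h2 : (fun x:ℝ => x^(4*H-3)) = fun x:ℝ => x^(-(3-4*H)) := by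
        funext x; congr 1; ring
      rw [h2]; exact h1
    have h2 := (h0.comp tendsto_natCast_atTop_atTop).const_mul ((c*(2*M))^2 * (c*M))
    simpa using h2
  apply tendsto_of_tendsto_of_tendsto_of_le_of_le' tendsto_const_nhds hlim
  · filter_upwards [Filter.eventually_ge_atTop 1] with N hN
    exact (key N hN).1
  · filter_upwards [Filter.eventually_ge_atTop 1] with N hN
    exact (key N hN).2
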